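/- Let H be a full hypergraph on W. Then every minimal hitting set of H is a maximal element of the ideal MC(H) = {S ⊆ W : ∀ b ∈ S, ∃ E ∈ H with S ∩ E = {b}}, i.e., it is an MC-set and no proper superset of it is an MC-set. -/

import Mathlib

/-- Every minimal hitting set of a full hypergraph is a maximal MC-set. -/
theorem minimal_hitting_is_maximal_MC {α : Type*} [DecidableEq α]
    (W : Finset α) (H : Finset (Finset α))
    (hedge : ∀ E ∈ H, E ⊆ W) (hfull : ∀ a ∈ W, ∃ E ∈ H, a ∈ E)
    (X : Finset α) (hXW : X ⊆ W)
    (hhit : ∀ E ∈ H, (X ∩ E).Nonempty)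
    (hmin : ∀ Y ⊂ X, ¬ (∀ E ∈ H, (Y ∩ E).Nonempty)) :
    (∀ b ∈ X, ∃ E ∈ H, X ∩ E = {b}) ∧
      ∀ S : Finset α, X ⊂ S → ¬ (∀ b ∈ S, ∃ E ∈ H, S ∩ E = {b}) := by
  constructor
  · intro b hb
    have hss : X.erase b ⊂ X := Finset.erase_ssubset hb
    have := hmin _ hss
    push_neg at this
    obtain ⟨E, hE, hempty⟩ := this
    refine ⟨E, hE, ?_⟩
    obtain ⟨x, hx⟩ := hhit E hE
    have hsub : X ∩ E ⊆ {b} := by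
      intro y hy
      simp only [Finset.mem_inter] at hy
      by_contra hyb
      simp only [Finset.mem_singleton] at hyb
      exact Finset.not_nonempty_iff_eq_empty.2 hempty ⟨y, Finset.mem_inter.2 ⟨Finset.mem_erase.2 ⟨hyb, hy.1⟩, hy.2⟩⟩
    apply Finset.Subset.antisymm hsub
    intro y hy
    simp only [Finset.mem_singleton] at hy
    subst hy
    have hx' := hsub hx
    simp only [Finset.mem_singleton] at hx'
    subst hx'
    exact hx
  · intro S hXS hMC
    obtain ⟨a, haS, haX⟩ := Finset.exists_of_ssubset hXS
    obtain ⟨E, hE, hSE⟩ := hMC a haS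
    obtain ⟨x, hx⟩ := hhit E hE
    simp only [Finset.mem_inter] at hx
    have : x ∈ S ∩ E := Finset.mem_inter.2 ⟨hXS.1 hx.1, hx.2⟩
    rw [hSE, Finset.mem_singleton] at this
    subst this
    exact haX hx.1
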